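/- arXiv:2106.03729 — 2 statements merged into one kernel-verified Lean document; each statement's English description precedes it below -/
import Mathlib

section
/- (Dirac) A finite simple graph G on n ≥ 3 vertices in which every vertex has degree at least n/2 contains a Hamilton cycle. -/
set_option linter.unusedSectionVars false

open SimpleGraph Walk List

lemma rot_ham {V : Type*} [DecidableEq V] {G : SimpleGraph V} {u v : V}
    (p : G.Walk u v) (hp : p.IsPath) (hl : 2 ≤ p.length) (hall : ∀ x, x ∈ p.support)
    (d : G.Dart) (hd : d ∈ p.darts) (h1 : G.Adj u d.snd) (h2 : G.Adj d.fst v) :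
    ∃ (w : V) (c : G.Walk w w), c.IsHamiltonianCycle := by
  obtain ⟨⟨a, b⟩, hab⟩ := d
  have hnd := hp.support_nodup
  have hvfst : v ∉ p.darts.map (fun d => d.toProd.1) := by
    have h := p.map_fst_darts_append
    have h2 : (p.darts.map (fun d => d.toProd.1) ++ [v]).Nodup := h ▸ hnd
    rw [List.nodup_append] at h2
    exact fun hv => h2.2.2 v hv v (List.mem_singleton_self v) rfl
  have hav : a ≠ v := by
    rintro rfl
    exact hvfst (List.mem_map.mpr ⟨⟨(a, b), hab⟩, hd, rfl⟩)
  have ha : a ∈ p.support := p.dart_fst_mem_support_of_mem_darts hd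
  obtain ⟨q1, r, hspec⟩ : ∃ (q1 : G.Walk u a) (r : G.Walk a v), q1.append r = p :=
    ⟨_, _, p.take_spec ha⟩
  cases r with
  | nil => exact absurd rfl hav
  | cons h' r' =>
    rename_i w
    have hw : w = b := by
      have hmemw : (⟨(a, w), h'⟩ : G.Dart) ∈ p.darts := by
        rw [← hspec, darts_append]
        exact List.mem_append_right _ List.mem_cons_self
      have hnodup : (p.darts.map (fun d => d.toProd.1)).Nodup := by
        rw [p.map_fst_darts]
        exact hnd.sublist (List.dropLast_sublist _)
      have heq := List.inj_on_of_nodup_map hnodup hmemw hd rfl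
      exact congrArg (fun d => d.toProd.2) heq
    subst hw
    have hpsup : p.support = q1.support ++ r'.support := by
      rw [← hspec, support_append, support_cons, List.tail_cons]
    rw [hpsup, List.nodup_append] at hnd
    obtain ⟨nd1, nd2, hdisj⟩ := hnd
    have hu1 : u ∈ q1.support := q1.start_mem_support
    have hb2 : w ∈ r'.support := r'.start_mem_support
    have hv2 : v ∈ r'.support := r'.end_mem_support
    have hbu_av : s(w, u) ≠ s(a, v) := by
      intro heq
      rw [Sym2.eq_iff] at heq
      rcases heq with ⟨rfl, rfl⟩ | ⟨rfl, rfl⟩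
      · exact hdisj _ hu1 _ hv2 rfl
      · have hq1 : q1 = Walk.nil := (isPath_iff_eq_nil (p := q1)).mp (IsPath.mk' nd1)
        have hr' : r' = Walk.nil := (isPath_iff_eq_nil (p := r')).mp (IsPath.mk' nd2)
        subst hq1 hr'
        rw [← hspec] at hl
        simp at hl
    set P : G.Walk u w := q1.append (Walk.cons h2 r'.reverse) with hP
    have hPsup : P.support = q1.support ++ r'.support.reverse := by
      simp [hP, support_append, support_reverse]
    have hPnd : P.support.Nodup := by
      rw [hPsup, List.nodup_append]
      exact ⟨nd1, List.nodup_reverse.mpr nd2,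
        fun x hx y hx' => hdisj x hx y (List.mem_reverse.mp hx')⟩
    have hPpath : P.IsPath := IsPath.mk' hPnd
    have hPe : s(w, u) ∉ P.edges := by
      intro hmem
      rw [hP, edges_append, edges_cons, List.mem_append, List.mem_cons] at hmem
      rcases hmem with h | h | h
      · exact hdisj _ (q1.fst_mem_support_of_mem_edges h) _ hb2 rfl
      · exact hbu_av h
      · exact hdisj _ hu1 _
          (by simpa [support_reverse] using r'.reverse.snd_mem_support_of_mem_edges h) rfl
    refine ⟨w, Walk.cons h1.symm P, ?_⟩
    rw [isHamiltonianCycle_iff_isCycle_and_support_count_tail_eq_one]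
    refine ⟨Path.cons_isCycle ⟨P, hPpath⟩ h1.symm hPe, fun x => ?_⟩
    have hx : x ∈ P.support := by
      rw [hPsup, List.mem_append, List.mem_reverse]
      have := hall x
      rw [hpsup, List.mem_append] at this
      exact this
    rw [support_cons, List.tail_cons]
    exact List.count_eq_one_of_mem hPnd hx
open SimpleGraph Walk List Finset

section
variable {V : Type*} [Fintype V] [DecidableEq V] {G : SimpleGraph V} [DecidableRel G.Adj]

lemma key_lemma {u v : V} (p : G.Walk u v) (hp : p.IsPath) (hall : ∀ x, x ∈ p.support)
    (hn : 3 ≤ Fintype.card V) (hsum : Fintype.card V ≤ G.degree u + G.degree v) :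
    ∃ (w : V) (c : G.Walk w w), c.IsHamiltonianCycle := by
  have hnd := hp.support_nodup
  have hsuplen : p.support.length = Fintype.card V := by
    have h1 : p.support.toFinset = Finset.univ := by
      ext x; simp [hall x]
    calc p.support.length = p.support.toFinset.card := (List.toFinset_card_of_nodup hnd).symm
    _ = Fintype.card V := by rw [h1]; rfl
  have hplen : p.length + 1 = Fintype.card V := by rw [← hsuplen, length_support]
  have hl : 2 ≤ p.length := by omega
  have hdartsnd : p.darts.Nodup := darts_nodup_of_support_nodup hnd
  set D : Finset G.Dart := p.darts.toFinset with hD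
  have hDcard : D.card = p.length := by
    rw [hD, List.toFinset_card_of_nodup hdartsnd, length_darts]
  set A : Finset G.Dart := D.filter (fun d => G.Adj d.fst v) with hA
  set B : Finset G.Dart := D.filter (fun d => G.Adj u d.snd) with hB
  have hfst_nodup : (p.darts.map (fun d : G.Dart => d.fst)).Nodup := by
    rw [p.map_fst_darts]; exact hnd.sublist (List.dropLast_sublist _)
  have hsnd_nodup : (p.darts.map (fun d : G.Dart => d.snd)).Nodup := by
    rw [p.map_snd_darts]; exact hnd.sublist (List.tail_sublist _)
  have hAcard : A.card = G.degree v := by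
    rw [← card_neighborFinset_eq_degree]
    apply Finset.card_bij (fun d _ => d.fst)
    · intro d hd
      rw [hA, Finset.mem_filter] at hd
      rw [mem_neighborFinset]
      exact hd.2.symm
    · intro d1 hd1 d2 hd2 heq
      rw [hA, Finset.mem_filter, hD, List.mem_toFinset] at hd1 hd2
      exact List.inj_on_of_nodup_map hfst_nodup hd1.1 hd2.1 heq
    · intro x hx
      rw [mem_neighborFinset] at hx
      have hxv : x ≠ v := fun h => G.irrefl (h ▸ hx)
      have hxs : x ∈ p.support := hall x
      have hxdl : x ∈ p.support.dropLast := by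
        have hconcat := p.map_fst_darts_append
        have : x ∈ p.darts.map (fun d : G.Dart => d.fst) ++ [v] := by
          rw [hconcat]; exact hxs
        rw [List.mem_append, List.mem_singleton] at this
        rcases this with h | h
        · rwa [← p.map_fst_darts]
        · exact absurd h hxv
      rw [← p.map_fst_darts, List.mem_map] at hxdl
      obtain ⟨d, hd, rfl⟩ := hxdl
      refine ⟨d, ?_, rfl⟩
      rw [hA, Finset.mem_filter, hD, List.mem_toFinset]
      exact ⟨hd, hx.symm⟩
  have hBcard : B.card = G.degree u := by
    rw [← card_neighborFinset_eq_degree]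
    apply Finset.card_bij (fun d _ => d.snd)
    · intro d hd
      rw [hB, Finset.mem_filter] at hd
      rw [mem_neighborFinset]
      exact hd.2
    · intro d1 hd1 d2 hd2 heq
      rw [hB, Finset.mem_filter, hD, List.mem_toFinset] at hd1 hd2
      exact List.inj_on_of_nodup_map hsnd_nodup hd1.1 hd2.1 heq
    · intro x hx
      rw [mem_neighborFinset] at hx
      have hxu : x ≠ u := fun h => G.irrefl (h ▸ hx)
      have hxt : x ∈ p.support.tail := by
        have hcons := p.cons_map_snd_darts
        have : x ∈ u :: p.darts.map (fun d : G.Dart => d.snd) := by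
          rw [hcons]; exact hall x
        rcases List.mem_cons.mp this with h | h
        · exact absurd h hxu
        · rwa [← p.map_snd_darts]
      rw [← p.map_snd_darts, List.mem_map] at hxt
      obtain ⟨d, hd, rfl⟩ := hxt
      refine ⟨d, ?_, rfl⟩
      rw [hB, Finset.mem_filter, hD, List.mem_toFinset]
      exact ⟨hd, hx⟩
  have hABsub : A ∪ B ⊆ D := by
    rw [hA, hB]
    exact Finset.union_subset (Finset.filter_subset _ _) (Finset.filter_subset _ _)
  have hinter : (A ∩ B).Nonempty := by
    rw [← Finset.card_pos]
    have h1 := Finset.card_union_add_card_inter A B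
    have h2 := Finset.card_le_card hABsub
    omega
  obtain ⟨d, hd⟩ := hinter
  rw [Finset.mem_inter, hA, hB, Finset.mem_filter, Finset.mem_filter, hD,
    List.mem_toFinset] at hd
  exact rot_ham p hp hl hall d hd.1.1 hd.2.2 hd.1.2
end
open SimpleGraph Walk List

lemma cycle_to_path {V : Type*} [DecidableEq V] {G : SimpleGraph V} {v u : V}
    (hvu : G.Adj v u) (c : G.Walk v v) (hc : c.IsCycle) (hall : ∀ x, x ∈ c.support)
    (hd : (⟨(v, u), hvu⟩ : G.Dart) ∈ c.darts) :
    ∃ (q : G.Walk u v), q.IsPath ∧ (∀ x, x ∈ q.support) ∧ s(u, v) ∉ q.edges := by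
  cases c with
  | nil => exact absurd rfl hc.ne_nil
  | cons h q =>
    rename_i x
    have hndtail : q.support.Nodup := by
      have := hc.support_nodup
      rwa [support_cons, List.tail_cons] at this
    have hql : q.support.getLast (support_ne_nil q) = v := q.getLast_support
    have hqdecomp : q.support.dropLast ++ [v] = q.support := by
      conv_rhs => rw [← List.dropLast_append_getLast (support_ne_nil q)]
      rw [hql]
    have hdl : q.support.dropLast.Nodup ∧ v ∉ q.support.dropLast := by
      have : (q.support.dropLast ++ [v]).Nodup := by rw [hqdecomp]; exact hndtail
      rw [List.nodup_append] at this
      exact ⟨this.1, fun hv => this.2.2 v hv v (List.mem_singleton_self v) rfl⟩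
    have hfst_nodup : ((Walk.cons h q).darts.map (fun d : G.Dart => d.fst)).Nodup := by
      rw [map_fst_darts]
      rw [support_cons]
      rw [List.dropLast_cons_of_ne_nil (support_ne_nil q)]
      exact List.nodup_cons.mpr ⟨hdl.2, hdl.1⟩
    have hx : x = u := by
      have hmem : (⟨(v, x), h⟩ : G.Dart) ∈ (Walk.cons h q).darts :=
        List.mem_cons_self
      have heq := List.inj_on_of_nodup_map hfst_nodup hmem hd rfl
      exact congrArg (fun d => d.toProd.2) heq
    subst hx
    refine ⟨q, IsPath.mk' hndtail, fun y => ?_, ?_⟩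
    · have := hall y
      rw [support_cons, List.mem_cons] at this
      rcases this with rfl | hy
      · exact q.end_mem_support
      · exact hy
    · have hen : (Walk.cons h q).edges.Nodup := hc.isTrail.edges_nodup
      rw [edges_cons, List.nodup_cons] at hen
      rw [Sym2.eq_swap] at hen
      exact hen.1
open SimpleGraph Walk List

section
variable {V : Type*} [Fintype V] [DecidableEq V]

lemma walk_of_chain {G : SimpleGraph V} :
    ∀ (l : List V) (y : V), List.Chain G.Adj y l →
      ∃ (z : V) (p : G.Walk y z), p.support = y :: l := by
  intro l
  induction l with
  | nil => exact fun y _ => ⟨y, Walk.nil, rfl⟩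
  | cons w l ih =>
    intro y hch
    replace hch := List.isChain_cons_cons.mp hch
    obtain ⟨z, p, hp⟩ := ih w hch.2
    exact ⟨z, Walk.cons hch.1 p, by rw [support_cons, hp]⟩

lemma ham_of_complete {G : SimpleGraph V} [DecidableRel G.Adj]
    (hn : 3 ≤ Fintype.card V) (hdeg : ∀ v : V, Fintype.card V ≤ 2 * G.degree v)
    (hcomp : ∀ x y : V, x ≠ y → G.Adj x y) :
    ∃ (w : V) (c : G.Walk w w), c.IsHamiltonianCycle := by
  have hne : Nonempty V := Fintype.card_pos_iff.mp (by omega)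
  have hnd : (Finset.univ : Finset V).toList.Nodup := Finset.nodup_toList _
  have hmem : ∀ x : V, x ∈ (Finset.univ : Finset V).toList := by
    intro x; rw [Finset.mem_toList]; exact Finset.mem_univ x
  obtain ⟨y, l, hl⟩ : ∃ y l, (Finset.univ : Finset V).toList = y :: l := by
    cases h : (Finset.univ : Finset V).toList with
    | nil => exact absurd (h ▸ hmem (Classical.arbitrary V)) (by simp)
    | cons a b => exact ⟨a, b, rfl⟩
  have hch' : List.Chain' (· ≠ ·) (y :: l) := (hl ▸ hnd).isChain
  have hch : List.Chain G.Adj y l :=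
    List.Chain.imp (fun a b hab => hcomp a b hab) hch'
  obtain ⟨z, p, hp⟩ := walk_of_chain l y hch
  have hpnd : p.support.Nodup := by rw [hp, ← hl]; exact hnd
  have hall : ∀ x, x ∈ p.support := fun x => by rw [hp, ← hl]; exact hmem x
  exact key_lemma p (IsPath.mk' hpnd) hall hn (by have := hdeg y; have := hdeg z; omega)

end
open SimpleGraph Walk List

section
variable {V : Type*} [Fintype V] [DecidableEq V]

lemma deg_mono {G H : SimpleGraph V} [DecidableRel G.Adj] [DecidableRel H.Adj]
    (h : G ≤ H) (v : V) : G.degree v ≤ H.degree v := by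
  rw [← card_neighborFinset_eq_degree, ← card_neighborFinset_eq_degree]
  apply Finset.card_le_card
  intro w hw
  rw [mem_neighborFinset] at hw ⊢
  exact h hw

lemma hamcycle_transfer {G H : SimpleGraph V} {w : V} (c : G.Walk w w)
    (hc : c.IsHamiltonianCycle) (hsub : ∀ e ∈ c.edges, e ∈ H.edgeSet) :
    (c.transfer H hsub).IsHamiltonianCycle := by
  rw [isHamiltonianCycle_iff_isCycle_and_support_count_tail_eq_one] at hc ⊢
  exact ⟨hc.1.transfer hsub, by rw [support_transfer]; exact hc.2⟩

theorem dirac_aux : ∀ (k : ℕ) (G : SimpleGraph V) (_ : DecidableRel G.Adj),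
    {pr : V × V | pr.1 ≠ pr.2 ∧ ¬G.Adj pr.1 pr.2}.ncard ≤ k →
    3 ≤ Fintype.card V → (∀ v : V, Fintype.card V ≤ 2 * G.degree v) →
    ∃ (w : V) (c : G.Walk w w), c.IsHamiltonianCycle := by
  intro k
  induction k with
  | zero =>
    intro G inst hcard hn hdeg
    apply ham_of_complete hn hdeg
    intro x y hxy
    by_contra hadj
    have hmem : (x, y) ∈ {pr : V × V | pr.1 ≠ pr.2 ∧ ¬G.Adj pr.1 pr.2} := ⟨hxy, hadj⟩
    have := Set.ncard_pos (Set.toFinite _) |>.mpr ⟨(x, y), hmem⟩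
    omega
  | succ k ih =>
    intro G inst hcard hn hdeg
    by_cases hcomp : ∀ x y : V, x ≠ y → G.Adj x y
    · exact ham_of_complete hn hdeg hcomp
    · push_neg at hcomp
      obtain ⟨u, v, huv, hnadj⟩ := hcomp
      set G' : SimpleGraph V := G ⊔ SimpleGraph.edge u v with hG'
      haveI instG' : DecidableRel G'.Adj := fun x y =>
        decidable_of_iff (G.Adj x y ∨ ((x = u ∧ y = v ∨ x = v ∧ y = u) ∧ x ≠ y))
          (by rw [hG', sup_adj, edge_adj])
      have hle : G ≤ G' := le_sup_left
      have hdeg' : ∀ w : V, Fintype.card V ≤ 2 * G'.degree w := fun w =>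
        le_trans (hdeg w) (Nat.mul_le_mul_left 2 (deg_mono hle w))
      have hG'uv : G'.Adj u v := by
        rw [hG', sup_adj, edge_adj]
        exact Or.inr ⟨Or.inl ⟨rfl, rfl⟩, huv⟩
      have hss : {pr : V × V | pr.1 ≠ pr.2 ∧ ¬G'.Adj pr.1 pr.2} ⊂
          {pr : V × V | pr.1 ≠ pr.2 ∧ ¬G.Adj pr.1 pr.2} := by
        constructor
        · rintro ⟨x, y⟩ ⟨hxy, hnadj'⟩
          exact ⟨hxy, fun h => hnadj' (hle h)⟩
        · intro hsub
          exact (hsub (show (u,v) ∈ _ from ⟨huv, hnadj⟩)).2 hG'uv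
      have hcard' : {pr : V × V | pr.1 ≠ pr.2 ∧ ¬G'.Adj pr.1 pr.2}.ncard ≤ k := by
        have := Set.ncard_lt_ncard hss (Set.toFinite _)
        omega
      obtain ⟨w, c, hc⟩ := ih G' instG' hcard' hn hdeg'
      -- edges of G' other than s(u,v) are edges of G
      have hedge : ∀ e ∈ G'.edgeSet, e ≠ s(u, v) → e ∈ G.edgeSet := by
        intro e he hne
        rw [hG', edgeSet_sup, SimpleGraph.edge_edgeSet_of_ne huv] at he
        rcases he with h | h
        · exact h
        · exact absurd h hne
      by_cases huvmem : s(u, v) ∈ c.edges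
      · -- extract Hamiltonian u-v path
        obtain ⟨d, hd, hde⟩ := List.mem_map.mp huvmem
        have hallc : ∀ x, x ∈ c.support := hc.mem_support
        rw [Dart.edge, Sym2.eq_iff] at hde
        have hcount := (isHamiltonianCycle_iff_isCycle_and_support_count_tail_eq_one.mp hc).2
        -- helper to finish from a Ham path q : G'.Walk a b avoiding s(u,v)
        have finish : ∀ (a b : V) (q : G'.Walk a b), q.IsPath → (∀ x, x ∈ q.support) →
            s(u, v) ∉ q.edges → ∃ (w : V) (c : G.Walk w w), c.IsHamiltonianCycle := by
          intro a b q hq hqall hqe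
          have hsub : ∀ e ∈ q.edges, e ∈ G.edgeSet := fun e he =>
            hedge e (q.edges_subset_edgeSet he) (fun h => hqe (h ▸ he))
          refine key_lemma (q.transfer G hsub) (hq.transfer hsub) ?_ hn
            (by have := hdeg a; have := hdeg b; omega)
          intro x; rw [support_transfer]; exact hqall x
        rcases hde with ⟨h1, h2⟩ | ⟨h1, h2⟩
        · -- d = (u,v) : rotate at u
          have hu : u ∈ c.support := hallc u
          have hc' : (c.rotate u hu).IsCycle := hc.isCycle.rotate hu
          have hall' : ∀ x, x ∈ (c.rotate u hu).support := by
            intro x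
            have hx : x ∈ c.support.tail := by
              have := hcount x
              exact List.count_pos_iff.mp (by omega)
            have hperm := (support_rotate c u hu).symm
            exact List.mem_of_mem_tail (hperm.mem_iff.mp hx)
          have hdartadj : G'.Adj u v := hG'uv
          have hd' : (⟨(u, v), hdartadj⟩ : G'.Dart) ∈ (c.rotate u hu).darts := by
            have hperm := rotate_darts c u hu
            apply hperm.symm.mem_iff.mp
            have : d = (⟨(u, v), hdartadj⟩ : G'.Dart) := by
              cases d with | mk t adj => cases t; simp_all
            rwa [this] at hd
          obtain ⟨q, hq, hqall, hqe⟩ := cycle_to_path hdartadj (c.rotate u hu) hc' hall' hd'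
          refine finish v u q hq hqall ?_
          rwa [Sym2.eq_swap] at hqe
        · -- d = (v,u) : rotate at v
          have hv : v ∈ c.support := hallc v
          have hc' : (c.rotate v hv).IsCycle := hc.isCycle.rotate hv
          have hall' : ∀ x, x ∈ (c.rotate v hv).support := by
            intro x
            have hx : x ∈ c.support.tail := by
              have := hcount x
              exact List.count_pos_iff.mp (by omega)
            have hperm := (support_rotate c v hv).symm
            exact List.mem_of_mem_tail (hperm.mem_iff.mp hx)
          have hdartadj : G'.Adj v u := hG'uv.symm
          have hd' : (⟨(v, u), hdartadj⟩ : G'.Dart) ∈ (c.rotate v hv).darts := by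
            have hperm := rotate_darts c v hv
            apply hperm.symm.mem_iff.mp
            have : d = (⟨(v, u), hdartadj⟩ : G'.Dart) := by
              cases d with | mk t adj => cases t; simp_all
            rwa [this] at hd
          obtain ⟨q, hq, hqall, hqe⟩ := cycle_to_path hdartadj (c.rotate v hv) hc' hall' hd'
          exact finish u v q hq hqall hqe
      · -- cycle avoids s(u,v) : transfer directly
        have hsub : ∀ e ∈ c.edges, e ∈ G.edgeSet := fun e he =>
          hedge e (c.edges_subset_edgeSet he) (fun h => huvmem (h ▸ he))
        exact ⟨w, c.transfer G hsub, hamcycle_transfer c hc hsub⟩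

end

/-- Dirac's theorem: a finite simple graph on n ≥ 3 vertices in which every
vertex has degree at least n/2 contains a Hamilton cycle. -/
theorem stmt_10 (V : Type*) [Fintype V] [DecidableEq V] (G : SimpleGraph V)
    [DecidableRel G.Adj] (hn : 3 ≤ Fintype.card V)
    (hdeg : ∀ v : V, Fintype.card V ≤ 2 * G.degree v) :
    ∃ (v : V) (p : G.Walk v v), p.IsHamiltonianCycle := by
  exact dirac_aux ({pr : V × V | pr.1 ≠ pr.2 ∧ ¬G.Adj pr.1 pr.2}.ncard) G
    inferInstance le_rfl hn hdeg
end

section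
/- In A* = F_2[ξ_1, ξ_2, ...], define c recursively by c(ξ_0) = 1 and Σ_{k=0}^{i} ξ_{i-k}^{2^k} c(ξ_k) = 0 for i ≥ 1, extended as an F_2-algebra homomorphism. Then c(ξ_i) = Σ_π Π_{k=1}^{ℓ(π)} ξ_{π(k)}^{2^{σ(k)}}, where the sum is over all ordered partitions (compositions) π of i into positive parts, ℓ(π) is the number of parts, π(k) is the k-th part, and σ(k) = π(1) + ... + π(k-1). -/
/-- The generators ξᵢ of the mod 2 dual Steenrod algebra A* = F₂[ξ₁, ξ₂, …],
with the convention ξ₀ = 1; the variable `X i` plays the role of ξ_{i+1}. -/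
noncomputable def xi : ℕ → MvPolynomial ℕ (ZMod 2)
  | 0 => 1
  | i + 1 => MvPolynomial.X i

noncomputable def milT : ℕ → List ℕ → MvPolynomial ℕ (ZMod 2)
  | _, [] => 1
  | s, a :: l => xi a ^ 2 ^ s * milT (s + a) l

@[simp] lemma milT_nil (s : ℕ) : milT s [] = 1 := rfl
@[simp] lemma milT_cons (s a : ℕ) (l : List ℕ) :
    milT s (a :: l) = xi a ^ 2 ^ s * milT (s + a) l := rfl

lemma milT_concat (a : ℕ) (l : List ℕ) : ∀ s : ℕ,
    milT s (l ++ [a]) = milT s l * xi a ^ 2 ^ (s + l.sum) := by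
  induction l with
  | nil => intro s; simp
  | cons b l ih => intro s; simp [ih, mul_assoc, add_assoc]

lemma prod_eq_milT (l : List ℕ) : ∀ s : ℕ,
    (∏ k : Fin l.length, xi (l.get k) ^ 2 ^ (s + (l.take k.val).sum)) = milT s l := by
  induction l with
  | nil => intro s; simp
  | cons a l ih =>
    intro s
    show (∏ k : Fin (l.length + 1),
        xi ((a :: l).get k) ^ 2 ^ (s + ((a :: l).take k.val).sum)) = _
    rw [Fin.prod_univ_succ]
    simp only [List.get, Fin.val_zero, List.take_zero, List.sum_nil, Nat.add_zero, milT_cons]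
    congr 1
    rw [← ih (s + a)]
    apply Finset.prod_congr rfl
    intro j _
    simp [Fin.val_succ, List.take_succ_cons, add_assoc]

lemma term_eq_milT {n : ℕ} (π : Composition n) :
    (∏ k : Fin π.length, xi (π.blocksFun k) ^ 2 ^ π.sizeUpTo k.val) = milT 0 π.blocks := by
  rw [← prod_eq_milT π.blocks 0]
  rw [← Fin.prod_congr' _ π.blocks_length]
  apply Finset.prod_congr rfl
  intro j _
  simp [Composition.blocksFun, Composition.sizeUpTo, Fin.cast]

noncomputable def milF (i : ℕ) : MvPolynomial ℕ (ZMod 2) :=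
  ∑ π : Composition i, milT 0 π.blocks

lemma milF_zero : milF 0 = 1 := by
  have huniq : ∀ π : Composition 0, π = Composition.ones 0 := by
    intro π
    ext1
    have hsum := π.blocks_sum
    cases h : π.blocks with
    | nil => simp [Composition.ones, h]
    | cons a t =>
      exfalso
      have ha : 0 < a := π.blocks_pos (h ▸ List.mem_cons_self (a := a) (l := t))
      rw [h, List.sum_cons] at hsum
      omega
  haveI : Unique (Composition 0) := ⟨⟨Composition.ones 0⟩, huniq⟩
  rw [milF, Fintype.sum_unique]
  simp only [huniq]
  rfl

noncomputable def milE (i : ℕ) (p : Σ k : Fin i, Composition k.val) : Composition i where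
  blocks := p.2.blocks ++ [i - p.1.val]
  blocks_pos := by
    intro j hj
    rcases List.mem_append.1 hj with h | h
    · exact p.2.blocks_pos h
    · have : j = i - p.1.val := by simpa using h
      subst this
      exact Nat.sub_pos_of_lt p.1.isLt
  blocks_sum := by
    rw [List.sum_append, p.2.blocks_sum, List.sum_cons, List.sum_nil, add_zero]
    exact Nat.add_sub_cancel' p.1.isLt.le

lemma milE_bij (i : ℕ) (hi : 0 < i) : Function.Bijective (milE i) := by
  constructor
  · rintro ⟨⟨k, hk⟩, σ⟩ ⟨⟨k', hk'⟩, τ⟩ h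
    have hb : σ.blocks ++ [i - k] = τ.blocks ++ [i - k'] := congrArg Composition.blocks h
    have hlast : i - k = i - k' := by
      have := congrArg List.getLast? hb
      rwa [List.getLast?_concat, List.getLast?_concat, Option.some_inj] at this
    have hkk : k = k' := by omega
    subst hkk
    have hστ : σ = τ := Composition.ext (List.append_inj_left' hb rfl)
    subst hστ
    rfl
  · intro π
    have hne : π.blocks ≠ [] := by
      intro h
      have hs := π.blocks_sum
      rw [h, List.sum_nil] at hs
      omega
    set a := π.blocks.getLast hne with ha
    have hsplit : π.blocks.dropLast ++ [a] = π.blocks := List.dropLast_append_getLast hne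
    have hapos : 0 < a := π.blocks_pos (ha ▸ List.getLast_mem hne)
    have hsum : π.blocks.dropLast.sum + a = i := by
      have h2 := congrArg List.sum hsplit
      rw [List.sum_append, List.sum_cons, List.sum_nil, add_zero, π.blocks_sum] at h2
      exact h2
    set k := π.blocks.dropLast.sum with hkdef
    have hki : k < i := by omega
    refine ⟨⟨⟨k, hki⟩, ⟨π.blocks.dropLast, ?_, rfl⟩⟩, ?_⟩
    · intro j hj
      exact π.blocks_pos (List.dropLast_subset _ hj)
    · apply Composition.ext
      show π.blocks.dropLast ++ [i - k] = π.blocks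
      rw [show i - k = a by omega]
      exact hsplit

lemma milF_rec (i : ℕ) (hi : 0 < i) :
    milF i = ∑ k ∈ Finset.range i, (xi (i - k)) ^ (2 ^ k) * milF k := by
  rw [milF, ← Fintype.sum_bijective (milE i) (milE_bij i hi)
      (fun p => milT 0 (milE i p).blocks) (fun π => milT 0 π.blocks) (fun p => rfl)]
  rw [← Finset.univ_sigma_univ, Finset.sum_sigma]
  rw [← Fin.sum_univ_eq_sum_range (fun k => (xi (i - k)) ^ (2 ^ k) * milF k) i]
  apply Finset.sum_congr rfl
  intro k _
  rw [milF, Finset.mul_sum]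
  apply Finset.sum_congr rfl
  intro σ _
  show milT 0 (σ.blocks ++ [i - k.val]) = _
  rw [milT_concat, σ.blocks_sum, zero_add, mul_comm]

lemma milF_main
    (c : MvPolynomial ℕ (ZMod 2) →ₐ[ZMod 2] MvPolynomial ℕ (ZMod 2))
    (hc : ∀ i, 1 ≤ i →
      ∑ k ∈ Finset.range (i + 1), (xi (i - k)) ^ (2 ^ k) * c (xi k) = 0) :
    ∀ i, 1 ≤ i → c (xi i) = milF i := by
  intro i
  induction i using Nat.strong_induction_on with
  | _ i IH =>
    intro hi
    have h := hc i hi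
    rw [Finset.sum_range_succ] at h
    have h0 : xi (i - i) ^ 2 ^ i = 1 := by
      rw [Nat.sub_self]; show (1 : MvPolynomial ℕ (ZMod 2)) ^ 2 ^ i = 1; rw [one_pow]
    rw [h0, one_mul] at h
    have hci : c (xi i) = ∑ k ∈ Finset.range i, (xi (i - k)) ^ (2 ^ k) * c (xi k) := by
      have := eq_neg_of_add_eq_zero_right h
      rwa [CharTwo.neg_eq] at this
    rw [hci, milF_rec i hi]
    apply Finset.sum_congr rfl
    intro k hk
    rcases Nat.eq_zero_or_pos k with h0k | h0k
    · subst h0k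
      rw [show xi 0 = 1 from rfl, map_one, milF_zero]
    · rw [IH k (Finset.mem_range.1 hk) h0k]

/-- Milnor's formula for the antipode: if c is an algebra map satisfying the
recursion Σ_{k=0}^{i} ξ_{i-k}^{2^k} c(ξ_k) = 0 for i ≥ 1, then c(ξᵢ) is the sum
over compositions π of i of Π_k ξ_{π(k)}^{2^{σ(k)}}. -/
theorem stmt_15
    (c : MvPolynomial ℕ (ZMod 2) →ₐ[ZMod 2] MvPolynomial ℕ (ZMod 2))
    (hc : ∀ i, 1 ≤ i →
      ∑ k ∈ Finset.range (i + 1), (xi (i - k)) ^ (2 ^ k) * c (xi k) = 0)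
    (i : ℕ) (hi : 1 ≤ i) :
    c (xi i) = ∑ π : Composition i,
      ∏ k : Fin π.length, (xi (π.blocksFun k)) ^ (2 ^ (π.sizeUpTo k.val)) := by
  rw [milF_main c hc i hi, milF]
  exact Finset.sum_congr rfl fun π _ => (term_eq_milT π).symm
end
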